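/- Let n ≥ 1 and let a = (a_1,…,a_n) and b = (b_1,…,b_n) be points of D such that a_i ≤ b_i for all i = 1,…,n. Then the function g : [0,1] → ℝ defined by g(λ) = f(a + λ·(b − a)) is antitone (monotonically decreasing) on [0,1]. -/

import Mathlib

/-- The extension of a point `t ∈ ℝⁿ` (coordinates `t₁,…,tₙ` indexed by `Fin n`,
so that `t i` is `t_{i+1}`) to indices `0,1,…` with the convention `t₀ = 1`
(and value `1` outside `{0,1,…,n}`, which is irrelevant). -/
noncomputable def extCoord (n : ℕ) (t : Fin n → ℝ) (i : ℕ) : ℝ :=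
  if h : 1 ≤ i ∧ i ≤ n then t ⟨i - 1, by omega⟩ else 1

/-- The set `D = {t ∈ ℝⁿ : tᵢ > 0 for all i, and tⱼ² ≤ tⱼ₋₁·tⱼ₊₁ for all
j = 1,…,n−1, with the convention t₀ = 1}`. -/
def Dset (n : ℕ) : Set (Fin n → ℝ) :=
  {t | (∀ i, 0 < t i) ∧
    ∀ j, 1 ≤ j → j ≤ n - 1 → (extCoord n t j) ^ 2 ≤ extCoord n t (j - 1) * extCoord n t (j + 1)}

/-- The function `f(t) = 1/t₁ + t₁/t₂ + ⋯ + t_{n−1}/tₙ = Σ_{j=1}^{n} t_{j−1}/t_j`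
(with the convention `t₀ = 1`). -/
noncomputable def fDP (n : ℕ) (t : Fin n → ℝ) : ℝ :=
  ∑ j ∈ Finset.Icc 1 n, extCoord n t (j - 1) / extCoord n t j

/-- AM-GM type cross inequality. -/
lemma cross_ineq (x1 x2 x3 y1 y2 y3 : ℝ) (hx1 : 0 < x1) (hx3 : 0 < x3)
    (hy1 : 0 < y1) (hy3 : 0 < y3) (hx2 : 0 < x2) (hy2 : 0 < y2)
    (h1 : x2 ^ 2 ≤ x1 * x3) (h2 : y2 ^ 2 ≤ y1 * y3) :
    2 * (x2 * y2) ≤ x1 * y3 + y1 * x3 := by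
  nlinarith [sq_nonneg (x1*y3 - y1*x3), mul_le_mul h1 h2 (sq_nonneg y2) (mul_pos hx1 hx3).le,
    mul_pos hx1 hy3, mul_pos hy1 hx3, mul_pos hx2 hy2, sq_nonneg (x2*y2)]

/-- The log-concavity-type condition is preserved by convex combinations. -/
lemma conv_ratio (x1 x2 x3 y1 y2 y3 l : ℝ) (hl0 : 0 ≤ l) (hl1 : l ≤ 1)
    (hx1 : 0 < x1) (hx3 : 0 < x3) (hy1 : 0 < y1) (hy3 : 0 < y3) (hx2 : 0 < x2) (hy2 : 0 < y2)
    (h1 : x2 ^ 2 ≤ x1 * x3) (h2 : y2 ^ 2 ≤ y1 * y3) :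
    (x2 + l * (y2 - x2)) ^ 2 ≤ (x1 + l * (y1 - x1)) * (x3 + l * (y3 - x3)) := by
  have hc := cross_ineq x1 x2 x3 y1 y2 y3 hx1 hx3 hy1 hy3 hx2 hy2 h1 h2
  have c1 : 0 ≤ (1 - l)^2 * (x1*x3 - x2^2) := by nlinarith [sq_nonneg (1-l)]
  have c2 : 0 ≤ l^2 * (y1*y3 - y2^2) := by nlinarith [sq_nonneg l]
  have c3 : 0 ≤ (l*(1-l)) * (x1*y3 + y1*x3 - 2*(x2*y2)) := by
    have := mul_nonneg hl0 (sub_nonneg.2 hl1)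
    nlinarith
  nlinarith [c1, c2, c3]

/-- The Abel-summation key inequality. -/
lemma key' (R S : ℕ → ℝ) (hS : ∀ j, 0 ≤ S j) (hS0 : S 0 = 0) :
    ∀ n, 1 ≤ n → (∀ j, 1 ≤ j → j + 1 ≤ n → R (j + 1) ≤ R j) →
      ∑ j ∈ Finset.Icc 1 n, R j * (S (j - 1) - S j) ≤ - R n * S n := by
  refine Nat.le_induction ?_ ?_
  · intro _
    rw [Finset.Icc_self, Finset.sum_singleton]
    simp [hS0]
  · intro n hn ih hdec
    rw [Finset.sum_Icc_succ_top (by omega : 1 ≤ n + 1)]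
    have h1 := ih (fun j hj hjn => hdec j hj (by omega))
    have h2 : R (n + 1) ≤ R n := hdec n hn le_rfl
    have h3 := hS n
    have h4 : (n + 1) - 1 = n := by omega
    rw [h4]
    nlinarith [mul_le_mul_of_nonneg_right h2 h3]

/-- The main antitonicity statement, for the extended sequences. -/
lemma aux_main (n : ℕ) (hn : 1 ≤ n) (A B : ℕ → ℝ)
    (hA0 : A 0 = 1) (hB0 : B 0 = 1)
    (hApos : ∀ i, 0 < A i) (hBpos : ∀ i, 0 < B i) (hAB : ∀ i, A i ≤ B i)
    (hAr : ∀ j, 1 ≤ j → j + 1 ≤ n → A j ^ 2 ≤ A (j - 1) * A (j + 1))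
    (hBr : ∀ j, 1 ≤ j → j + 1 ≤ n → B j ^ 2 ≤ B (j - 1) * B (j + 1)) :
    AntitoneOn (fun l : ℝ => ∑ j ∈ Finset.Icc 1 n,
      (A (j - 1) + l * (B (j - 1) - A (j - 1))) / (A j + l * (B j - A j)))
      (Set.Icc (0 : ℝ) 1) := by
  have hTpos : ∀ l : ℝ, 0 ≤ l → l ≤ 1 → ∀ i, 0 < A i + l * (B i - A i) := by
    intro l hl0 hl1 i
    nlinarith [hApos i, hBpos i, mul_nonneg hl0 (sub_nonneg.2 (hAB i)),
      mul_nonneg (sub_nonneg.2 hl1) (hApos i).le]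
  have hD : ∀ l : ℝ, (∀ i, 0 < A i + l * (B i - A i)) → HasDerivAt
      (fun l : ℝ => ∑ j ∈ Finset.Icc 1 n,
        (A (j - 1) + l * (B (j - 1) - A (j - 1))) / (A j + l * (B j - A j)))
      (∑ j ∈ Finset.Icc 1 n,
        ((B (j - 1) - A (j - 1)) * (A j + l * (B j - A j)) -
          (A (j - 1) + l * (B (j - 1) - A (j - 1))) * (B j - A j)) /
          (A j + l * (B j - A j)) ^ 2) l := by
    intro l hT
    apply HasDerivAt.fun_sum
    intro j _
    have h1 : HasDerivAt (fun l : ℝ => A (j - 1) + l * (B (j - 1) - A (j - 1)))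
        (B (j - 1) - A (j - 1)) l := by
      simpa using (hasDerivAt_const l (A (j - 1))).fun_add
        ((hasDerivAt_id l).mul_const (B (j - 1) - A (j - 1)))
    have h2 : HasDerivAt (fun l : ℝ => A j + l * (B j - A j)) (B j - A j) l := by
      simpa using (hasDerivAt_const l (A j)).fun_add ((hasDerivAt_id l).mul_const (B j - A j))
    exact h1.div h2 (hT j).ne'
  apply antitoneOn_of_deriv_nonpos (convex_Icc 0 1)
  · -- continuity
    apply continuousOn_finset_sum
    intro j _
    exact ((continuous_const.add (continuous_id.mul continuous_const)).continuousOn).div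
      ((continuous_const.add (continuous_id.mul continuous_const)).continuousOn)
      (fun l hl => (hTpos l hl.1 hl.2 j).ne')
  · rw [interior_Icc]
    intro l hl
    exact (hD l (hTpos l hl.1.le hl.2.le)).differentiableAt.differentiableWithinAt
  · rw [interior_Icc]
    intro l hl
    have hl0 : (0:ℝ) ≤ l := hl.1.le
    have hl1 : l ≤ 1 := hl.2.le
    have hT : ∀ i, 0 < A i + l * (B i - A i) := hTpos l hl0 hl1
    rw [(hD l hT).deriv]
    have hsum : (∑ j ∈ Finset.Icc 1 n,
          ((B (j - 1) - A (j - 1)) * (A j + l * (B j - A j)) -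
            (A (j - 1) + l * (B (j - 1) - A (j - 1))) * (B j - A j)) /
            (A j + l * (B j - A j)) ^ 2) =
        ∑ j ∈ Finset.Icc 1 n,
          ((A (j - 1) + l * (B (j - 1) - A (j - 1))) / (A j + l * (B j - A j))) *
            ((B (j - 1) - A (j - 1)) / (A (j - 1) + l * (B (j - 1) - A (j - 1))) -
              (B j - A j) / (A j + l * (B j - A j))) := by
      refine Finset.sum_congr rfl fun j _ => ?_
      have h1 := (hT (j - 1)).ne'
      have h2 := (hT j).ne'
      rw [div_sub_div _ _ h1 h2, div_mul_div_comm, div_eq_div_iff (pow_ne_zero 2 h2) (mul_ne_zero h2 (mul_ne_zero h1 h2))]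
      ring
    rw [hsum]
    have hkey := key' (fun j => (A (j - 1) + l * (B (j - 1) - A (j - 1))) / (A j + l * (B j - A j)))
        (fun j => (B j - A j) / (A j + l * (B j - A j)))
        (fun j => div_nonneg (sub_nonneg.2 (hAB j)) (hT j).le)
        (by simp [hA0, hB0]) n hn ?_
    · refine le_trans hkey ?_
      have hR : 0 < (A (n - 1) + l * (B (n - 1) - A (n - 1))) / (A n + l * (B n - A n)) :=
        div_pos (hT (n - 1)) (hT n)
      have hS : 0 ≤ (B n - A n) / (A n + l * (B n - A n)) :=
        div_nonneg (sub_nonneg.2 (hAB n)) (hT n).le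
      nlinarith
    · intro j hj hjn
      simp only [Nat.add_sub_cancel]
      have hrat : (A j + l * (B j - A j)) ^ 2 ≤
          (A (j - 1) + l * (B (j - 1) - A (j - 1))) * (A (j + 1) + l * (B (j + 1) - A (j + 1))) :=
        conv_ratio _ _ _ _ _ _ l hl0 hl1 (hApos _) (hApos _) (hBpos _) (hBpos _) (hApos _)
          (hBpos _) (hAr j hj hjn) (hBr j hj hjn)
      rw [div_le_div_iff₀ (hT (j + 1)) (hT j)]
      nlinarith [hrat]

/-- For `n ≥ 1` and points `a, b ∈ D` with `aᵢ ≤ bᵢ` for all `i`, the function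
`g(λ) = f(a + λ·(b − a))` is antitone on `[0,1]`. -/
theorem stmt5 (n : ℕ) (hn : 1 ≤ n) (a b : Fin n → ℝ)
    (ha : a ∈ Dset n) (hb : b ∈ Dset n) (hab : ∀ i, a i ≤ b i) :
    AntitoneOn (fun l : ℝ => fDP n (a + l • (b - a))) (Set.Icc (0 : ℝ) 1) := by
  have hApos : ∀ i, 0 < extCoord n a i := by
    intro i; unfold extCoord; split_ifs with h
    · exact ha.1 _
    · norm_num
  have hBpos : ∀ i, 0 < extCoord n b i := by
    intro i; unfold extCoord; split_ifs with h
    · exact hb.1 _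
    · norm_num
  have hAB : ∀ i, extCoord n a i ≤ extCoord n b i := by
    intro i; unfold extCoord; split_ifs with h
    · exact hab _
    · exact le_refl 1
  have hA0 : extCoord n a 0 = 1 := by simp [extCoord]
  have hB0 : extCoord n b 0 = 1 := by simp [extCoord]
  have hlin : ∀ (l : ℝ) (i : ℕ), extCoord n (a + l • (b - a)) i =
      extCoord n a i + l * (extCoord n b i - extCoord n a i) := by
    intro l i; unfold extCoord; split_ifs with h
    · simp only [Pi.add_apply, Pi.smul_apply, Pi.sub_apply, smul_eq_mul]
    · ring
  have heq : ∀ l : ℝ, fDP n (a + l • (b - a)) = ∑ j ∈ Finset.Icc 1 n,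
      (extCoord n a (j - 1) + l * (extCoord n b (j - 1) - extCoord n a (j - 1))) /
        (extCoord n a j + l * (extCoord n b j - extCoord n a j)) := by
    intro l
    unfold fDP
    exact Finset.sum_congr rfl fun j _ => by rw [hlin l (j - 1), hlin l j]
  simp only [heq]
  exact aux_main n hn (extCoord n a) (extCoord n b) hA0 hB0 hApos hBpos hAB
    (fun j hj hjn => ha.2 j hj (by omega)) (fun j hj hjn => hb.2 j hj (by omega))
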